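/- arXiv:2508.11804 — 4 statements merged into one kernel-verified Lean document; each statement's English description precedes it below -/
import Mathlib

section
/- Among 2×2 real symmetric positive semidefinite matrices E = [[ε₁, ε₃],[ε₃, ε₂]] satisfying (n₁+ε₁)(n₂+ε₂) - ε₃² = ω² with n₁, n₂ > 0 and ω² > n₁n₂, the determinant ε₁ε₂ - ε₃² is maximized at ε₃ = 0, ε₁ = √(n₁/n₂)(|ω| - √(n₁n₂)), ε₂ = √(n₂/n₁)(|ω| - √(n₁n₂)), with maximal value (|ω| - √(n₁n₂))². -/
open Matrix

lemma psd_det_nonneg {M : Matrix (Fin 2) (Fin 2) ℝ} (h : M.PosSemidef) : 0 ≤ M.det := by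
  rw [h.isHermitian.det_eq_prod_eigenvalues]
  exact Finset.prod_nonneg fun i _ => h.eigenvalues_nonneg i

theorem constrained_noise_det_max
    (n₁ n₂ ω : ℝ) (hn₁ : 0 < n₁) (hn₂ : 0 < n₂) (hω : n₁ * n₂ < ω ^ 2) :
    (∀ ε₁ ε₂ ε₃ : ℝ,
        (!![ε₁, ε₃; ε₃, ε₂] : Matrix (Fin 2) (Fin 2) ℝ).PosSemidef →
        (n₁ + ε₁) * (n₂ + ε₂) - ε₃ ^ 2 = ω ^ 2 →
        ε₁ * ε₂ - ε₃ ^ 2 ≤ (|ω| - Real.sqrt (n₁ * n₂)) ^ 2) ∧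
      ((!![Real.sqrt (n₁ / n₂) * (|ω| - Real.sqrt (n₁ * n₂)), 0;
            0, Real.sqrt (n₂ / n₁) * (|ω| - Real.sqrt (n₁ * n₂))] :
          Matrix (Fin 2) (Fin 2) ℝ).PosSemidef ∧
        (n₁ + Real.sqrt (n₁ / n₂) * (|ω| - Real.sqrt (n₁ * n₂))) *
            (n₂ + Real.sqrt (n₂ / n₁) * (|ω| - Real.sqrt (n₁ * n₂))) - 0 ^ 2 = ω ^ 2 ∧
        (Real.sqrt (n₁ / n₂) * (|ω| - Real.sqrt (n₁ * n₂))) *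
            (Real.sqrt (n₂ / n₁) * (|ω| - Real.sqrt (n₁ * n₂))) - 0 ^ 2 =
          (|ω| - Real.sqrt (n₁ * n₂)) ^ 2) := by
  have hs0 : 0 ≤ Real.sqrt (n₁ * n₂) := Real.sqrt_nonneg _
  have hssq : Real.sqrt (n₁ * n₂) ^ 2 = n₁ * n₂ := Real.sq_sqrt (by positivity)
  have hW0 : 0 ≤ |ω| := abs_nonneg _
  have hWsq : |ω| ^ 2 = ω ^ 2 := sq_abs ω
  have hsW : Real.sqrt (n₁ * n₂) < |ω| := by nlinarith
  set s := Real.sqrt (n₁ * n₂) with hs_def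
  set W := |ω| with hW_def
  constructor
  · intro ε₁ ε₂ ε₃ hP hC
    have h1 : 0 ≤ ε₁ := by
      have := hP.dotProduct_mulVec_nonneg ![1, 0]
      simpa [Matrix.mulVec, dotProduct, Fin.sum_univ_two] using this
    have h2 : 0 ≤ ε₂ := by
      have := hP.dotProduct_mulVec_nonneg ![0, 1]
      simpa [Matrix.mulVec, dotProduct, Fin.sum_univ_two] using this
    have hdet : 0 ≤ ε₁ * ε₂ - ε₃ ^ 2 := by
      have := psd_det_nonneg hP
      rw [Matrix.det_fin_two_of] at this
      nlinarith [this]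
    have hQ : 0 ≤ n₂ * ε₁ + n₁ * ε₂ := by positivity
    have key : (n₂ * ε₁ + n₁ * ε₂ + 2 * s ^ 2) ^ 2 ≥ (2 * s * W) ^ 2 := by
      nlinarith [sq_nonneg (n₂ * ε₁ - n₁ * ε₂), hdet, hC, hssq, hWsq,
        mul_nonneg (mul_nonneg hn₁.le hn₂.le) hdet]
    have key2 : n₂ * ε₁ + n₁ * ε₂ + 2 * s ^ 2 ≥ 2 * s * W := by
      nlinarith [key, hQ, sq_nonneg s, mul_nonneg hs0 hW0]
    nlinarith [hC, hssq, hWsq, key2]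
  · have ha0 : 0 < Real.sqrt n₁ := Real.sqrt_pos.mpr hn₁
    have hb0 : 0 < Real.sqrt n₂ := Real.sqrt_pos.mpr hn₂
    have ha2 : Real.sqrt n₁ ^ 2 = n₁ := Real.sq_sqrt hn₁.le
    have hb2 : Real.sqrt n₂ ^ 2 = n₂ := Real.sq_sqrt hn₂.le
    have f1 : Real.sqrt (n₁ / n₂) = Real.sqrt n₁ / Real.sqrt n₂ := Real.sqrt_div hn₁.le _
    have f2 : Real.sqrt (n₂ / n₁) = Real.sqrt n₂ / Real.sqrt n₁ := Real.sqrt_div hn₂.le _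
    have fs : s = Real.sqrt n₁ * Real.sqrt n₂ := Real.sqrt_mul hn₁.le _
    have hx : 0 ≤ Real.sqrt (n₁ / n₂) * (W - s) :=
      mul_nonneg (Real.sqrt_nonneg _) (by linarith)
    have hy : 0 ≤ Real.sqrt (n₂ / n₁) * (W - s) :=
      mul_nonneg (Real.sqrt_nonneg _) (by linarith)
    refine ⟨?_, ?_, ?_⟩
    · have hM : (!![Real.sqrt (n₁ / n₂) * (W - s), 0; 0, Real.sqrt (n₂ / n₁) * (W - s)] :
          Matrix (Fin 2) (Fin 2) ℝ) =
          Matrix.diagonal ![Real.sqrt (n₁ / n₂) * (W - s), Real.sqrt (n₂ / n₁) * (W - s)] := by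
        ext i j
        fin_cases i <;> fin_cases j <;> simp [Matrix.diagonal]
      rw [hM]
      refine Matrix.posSemidef_diagonal_iff.mpr fun i => ?_
      fin_cases i <;> simpa using ‹_›
    · rw [f1, f2, fs]
      have hb : Real.sqrt n₂ ≠ 0 := hb0.ne'
      have ha : Real.sqrt n₁ ≠ 0 := ha0.ne'
      field_simp
      linear_combination (Real.sqrt n₂ * Real.sqrt n₁ * (Real.sqrt n₁ ^ 2 - n₁) -
          Real.sqrt n₁ ^ 2 * W) * hb2 + (-(Real.sqrt n₂ ^ 2 * W)) * ha2 +
        (Real.sqrt n₁ * Real.sqrt n₂) * hWsq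
    · rw [f1, f2, fs]
      field_simp
      ring
end

section
/- For the two-mode squeezed thermal state with parameters v ≥ 1, r ≥ 0, the quantity 1 - det(C)/det(V_A) - √(det N) equals (2cosh²(2r) - v·cosh(2r) - 1)/cosh²(2r), where C = diag(v sinh 2r, -v sinh 2r), V_A = v cosh(2r)·I, and N = (v/cosh(2r))·I. In particular, this quantity is positive if and only if cosh(2r) > (v + √(v²+8))/4. -/
theorem tmst_atemporality_criterion (v r : ℝ) (hv : 1 ≤ v) (hr : 0 ≤ r) :
    1 - (-(v ^ 2 * Real.sinh (2 * r) ^ 2)) / (v ^ 2 * Real.cosh (2 * r) ^ 2) -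
        Real.sqrt (v ^ 2 / Real.cosh (2 * r) ^ 2) =
      (2 * Real.cosh (2 * r) ^ 2 - v * Real.cosh (2 * r) - 1) / Real.cosh (2 * r) ^ 2 ∧
    (0 < (2 * Real.cosh (2 * r) ^ 2 - v * Real.cosh (2 * r) - 1) / Real.cosh (2 * r) ^ 2 ↔
      (v + Real.sqrt (v ^ 2 + 8)) / 4 < Real.cosh (2 * r)) := by
  set c := Real.cosh (2 * r) with hc
  have hc1 : 1 ≤ c := Real.one_le_cosh _
  have hcpos : 0 < c := lt_of_lt_of_le one_pos hc1
  have hvpos : 0 < v := lt_of_lt_of_le one_pos hv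
  have hs : Real.sinh (2 * r) ^ 2 = c ^ 2 - 1 := by
    have := Real.cosh_sq_sub_sinh_sq (2 * r)
    nlinarith [this]
  have hsqrt : Real.sqrt (v ^ 2 / c ^ 2) = v / c := by
    rw [show v ^ 2 / c ^ 2 = (v / c) ^ 2 by ring]
    exact Real.sqrt_sq (by positivity)
  constructor
  · rw [hsqrt, hs]
    field_simp
    ring
  · have hspos : 0 < Real.sqrt (v ^ 2 + 8) := Real.sqrt_pos.mpr (by positivity)
    have hssq : Real.sqrt (v ^ 2 + 8) ^ 2 = v ^ 2 + 8 :=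
      Real.sq_sqrt (by positivity)
    have hsv : v < Real.sqrt (v ^ 2 + 8) := by
      nlinarith [Real.sqrt_nonneg (v ^ 2 + 8)]
    constructor
    · intro h
      have hnum : 0 < 2 * c ^ 2 - v * c - 1 := by
        have := (div_pos_iff.mp h)
        rcases this with ⟨h1, _⟩ | ⟨_, h2⟩
        · exact h1
        · nlinarith
      by_contra hle
      push_neg at hle
      -- c ≤ (v + s)/4, and c > (v - s)/4 since that's negative < 1 ≤ c
      have hβ : (v - Real.sqrt (v ^ 2 + 8)) / 4 < c := by nlinarith
      nlinarith [mul_nonneg (sub_nonneg.mpr hle) (sub_nonneg.mpr hβ.le)]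
    · intro h
      apply div_pos _ (by positivity)
      have hβ : (v - Real.sqrt (v ^ 2 + 8)) / 4 < c := by nlinarith
      nlinarith
end

section
/- Define E(v,r) = −ln(v·e^{−2r}) = 2r − ln v for v ≥ 1, r ≥ 0. Subject to the constraint v ≥ cosh(4r)/cosh(2r), one has E(v,r) ≤ 2r − ln(cosh(4r)/cosh(2r)), and the right-hand side, as a function of r ≥ 0, attains a maximum value of approximately 0.1882 (in particular it is bounded above by 0.19). -/
theorem logneg_bound_zero_atemporality (v r : ℝ) (hv : 1 ≤ v) (hr : 0 ≤ r)
    (hconstraint : Real.cosh (4 * r) / Real.cosh (2 * r) ≤ v) :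
    2 * r - Real.log v ≤ 2 * r - Real.log (Real.cosh (4 * r) / Real.cosh (2 * r)) ∧
      ∀ s : ℝ, 0 ≤ s →
        2 * s - Real.log (Real.cosh (4 * s) / Real.cosh (2 * s)) < 0.19 := by
  constructor
  · have hpos : 0 < Real.cosh (4 * r) / Real.cosh (2 * r) :=
      div_pos (Real.cosh_pos _) (Real.cosh_pos _)
    have := Real.log_le_log hpos hconstraint
    linarith
  · intro s hs
    -- key bound: (1+√2)/2 < exp 0.19
    have hs2 : Real.sqrt 2 < 1.41422 := by
      nlinarith [Real.sq_sqrt (by norm_num : (2:ℝ) ≥ 0), Real.sqrt_nonneg 2]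
    have hs2' : (1:ℝ) ≤ Real.sqrt 2 := by
      nlinarith [Real.sq_sqrt (by norm_num : (2:ℝ) ≥ 0), Real.sqrt_nonneg 2]
    have e1 : (1 + 0.19/32 : ℝ) ≤ Real.exp (0.19/32) := by
      linarith [Real.add_one_le_exp ((0.19:ℝ)/32)]
    have e2 : ((1 + 0.19/32 : ℝ))^(32:ℕ) ≤ Real.exp 0.19 := by
      calc ((1 + 0.19/32 : ℝ))^(32:ℕ) ≤ (Real.exp (0.19/32))^(32:ℕ) :=
            pow_le_pow_left₀ (by norm_num) e1 32
        _ = Real.exp ((32:ℕ) * (0.19/32)) := (Real.exp_nat_mul _ 32).symm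
        _ = Real.exp 0.19 := by norm_num
    have e3 : (1 + Real.sqrt 2) / 2 < Real.exp 0.19 := by
      have : ((1 + 0.19/32 : ℝ))^(32:ℕ) > 1.20711 := by norm_num
      nlinarith
    -- u = exp (2 s)
    set u := Real.exp (2 * s) with hu
    have hu0 : 0 < u := Real.exp_pos _
    have hc2 : Real.cosh (2 * s) = (u + u⁻¹) / 2 := by
      rw [Real.cosh_eq, hu, ← Real.exp_neg]
    have hc4 : Real.cosh (4 * s) = (u ^ 2 + (u ^ 2)⁻¹) / 2 := by
      rw [Real.cosh_eq]
      rw [show (4:ℝ) * s = 2 * s + 2 * s by ring, Real.exp_add, Real.exp_neg, Real.exp_add]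
      rw [hu]; ring
    have hc2p : 0 < Real.cosh (2 * s) := Real.cosh_pos _
    have hc4p : 0 < Real.cosh (4 * s) := Real.cosh_pos _
    -- key algebraic inequality: u * cosh 2s ≤ (1+√2)/2 * cosh 4s
    have key : u * Real.cosh (2 * s) ≤ (1 + Real.sqrt 2) / 2 * Real.cosh (4 * s) := by
      rw [hc2, hc4]
      have h2 : Real.sqrt 2 ^ 2 = 2 := Real.sq_sqrt (by norm_num)
      have hne : u ≠ 0 := ne_of_gt hu0
      have eL : u * ((u + u⁻¹) / 2) = (u ^ 2 + 1) / 2 := by field_simp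
      have eR : (1 + Real.sqrt 2) / 2 * ((u ^ 2 + (u ^ 2)⁻¹) / 2)
          = (1 + Real.sqrt 2) * (u ^ 4 + 1) / (4 * u ^ 2) := by field_simp; ring
      rw [eL, eR, div_le_div_iff₀ (by norm_num) (by positivity)]
      nlinarith [mul_nonneg (by nlinarith : (0:ℝ) ≤ Real.sqrt 2 - 1)
        (sq_nonneg (u ^ 2 - 1 - Real.sqrt 2))]
    -- deduce exp (2s - 0.19) < cosh 4s / cosh 2s
    have hlt : u * Real.cosh (2 * s) < Real.exp 0.19 * Real.cosh (4 * s) := by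
      calc u * Real.cosh (2 * s) ≤ (1 + Real.sqrt 2) / 2 * Real.cosh (4 * s) := key
        _ < Real.exp 0.19 * Real.cosh (4 * s) := by
            exact mul_lt_mul_of_pos_right e3 hc4p
    have hexp : Real.exp (2 * s - 0.19) < Real.cosh (4 * s) / Real.cosh (2 * s) := by
      rw [Real.exp_sub, div_lt_div_iff₀ (Real.exp_pos _) hc2p]
      calc Real.exp (2 * s) * Real.cosh (2 * s) < Real.exp 0.19 * Real.cosh (4 * s) := hlt
        _ = Real.cosh (4 * s) * Real.exp 0.19 := by ring
    have := (Real.lt_log_iff_exp_lt (div_pos hc4p hc2p)).2 hexp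
    linarith
end

section
/- For u, v > 0 with uv ≥ 1, the quantity |1 − det C/det V_A| − √(det N) for the balanced beam-splitter state (V_A = V_B = ((u+v)/2)I, C = diag(−(u−v)/2,(u−v)/2), N = (2uv/(u+v))I) equals 2(u²(1−v) + v²(1−u))/(u+v)², and is positive if and only if (1−u)/u² > (v−1)/v². -/
theorem beamsplitter_atemporality_criterion (u v : ℝ) (hu : 0 < u) (hv : 0 < v)
    (huv : 1 ≤ u * v) :
    |1 - (-((u - v) ^ 2 / 4)) / ((u + v) ^ 2 / 4)| -
        Real.sqrt (4 * u ^ 2 * v ^ 2 / (u + v) ^ 2) =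
      2 * (u ^ 2 * (1 - v) + v ^ 2 * (1 - u)) / (u + v) ^ 2 ∧
    (0 < 2 * (u ^ 2 * (1 - v) + v ^ 2 * (1 - u)) / (u + v) ^ 2 ↔
      (v - 1) / v ^ 2 < (1 - u) / u ^ 2) := by
  have hsum : 0 < u + v := by linarith
  have hsum2 : 0 < (u + v) ^ 2 := by positivity
  constructor
  · have h1 : 1 - (-((u - v) ^ 2 / 4)) / ((u + v) ^ 2 / 4)
        = ((u + v) ^ 2 + (u - v) ^ 2) / (u + v) ^ 2 := by
      field_simp
      ring
    have hnn : 0 ≤ 1 - (-((u - v) ^ 2 / 4)) / ((u + v) ^ 2 / 4) := by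
      rw [h1]; positivity
    rw [abs_of_nonneg hnn, h1]
    have hsq : 4 * u ^ 2 * v ^ 2 / (u + v) ^ 2 = (2 * u * v / (u + v)) ^ 2 := by
      field_simp; ring
    rw [hsq, Real.sqrt_sq (by positivity)]
    field_simp
    ring
  · rw [div_pos_iff]
    constructor
    · rintro (⟨h, -⟩ | ⟨-, h⟩)
      · rw [div_lt_div_iff₀ (by positivity) (by positivity)]
        nlinarith
      · linarith
    · intro h
      left
      rw [div_lt_div_iff₀ (by positivity) (by positivity)] at h
      refine ⟨by nlinarith, hsum2⟩
end
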